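/- Let A be an additive category, C a full subcategory, F : A^op → Ab an additive functor, and H ⊆ F|_C a subfunctor of the restriction of F to C. Define the subfunctor F_H ⊆ F by F_H(X) = ⋂_{α : C → X, C ∈ C} F(α)^{-1}(H(C)). Then F_H restricted to C equals H, and F_H is C-determined: for any subfunctor F' ⊆ F, one has F' ⊆ F_H if and only if F'|_C ⊆ H. -/

import Mathlib

open CategoryTheory Opposite

section Stmt4

variable {A : Type*} [Category A] [Preadditive A] [Limits.HasFiniteBiproducts A]
variable (F : Aᵒᵖ ⥤ AddCommGrpCat) (𝒞 : Set A)

/-- A family of subgroups `G X ⊆ F(X)` is a subfunctor of `F : Aᵒᵖ → Ab` if it is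
stable under the action of morphisms: for `f : X ⟶ Y`, `F(f)` maps `G Y` into `G X`. -/
def IsSubfunctor (G : ∀ X : A, AddSubgroup (F.obj (op X))) : Prop :=
  ∀ ⦃X Y : A⦄ (f : X ⟶ Y) (y : F.obj (op Y)), y ∈ G Y → F.map f.op y ∈ G X

/-- A family of subgroups indexed by the objects of the full subcategory `𝒞` is a
subfunctor of the restriction `F|_𝒞` if it is stable under morphisms of `𝒞`. -/
def IsSubfunctorOn (H : ∀ X : A, AddSubgroup (F.obj (op X))) : Prop :=
  ∀ ⦃X Y : A⦄, X ∈ 𝒞 → Y ∈ 𝒞 →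
    ∀ (f : X ⟶ Y) (y : F.obj (op Y)), y ∈ H Y → F.map f.op y ∈ H X

/-- The subfunctor `F_H ⊆ F` determined by `H ⊆ F|_𝒞`, defined by
`F_H(X) = ⋂_{α : C → X, C ∈ 𝒞} F(α)⁻¹(H(C))`. -/
def FH (H : ∀ X : A, AddSubgroup (F.obj (op X))) (X : A) :
    AddSubgroup (F.obj (op X)) where
  carrier := {x | ∀ (C : A), C ∈ 𝒞 → ∀ α : C ⟶ X, F.map α.op x ∈ H C}
  zero_mem' := by
    intro C hC α
    simpa using (H C).zero_mem
  add_mem' := by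
    intro a b ha hb C hC α
    rw [map_add]
    exact (H C).add_mem (ha C hC α) (hb C hC α)
  neg_mem' := by
    intro a ha C hC α
    rw [map_neg]
    exact (H C).neg_mem (ha C hC α)

/-- `F_H` restricted to `𝒞` equals `H`, and `F_H` is `𝒞`-determined: a subfunctor
`F' ⊆ F` is contained in `F_H` if and only if its restriction to `𝒞` is contained in `H`. -/
theorem FH_restriction_eq_and_determined
    (H : ∀ X : A, AddSubgroup (F.obj (op X))) (hH : IsSubfunctorOn F 𝒞 H) :
    (∀ C ∈ 𝒞, FH F 𝒞 H C = H C) ∧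
      (∀ G : ∀ X : A, AddSubgroup (F.obj (op X)), IsSubfunctor F G →
        ((∀ X : A, G X ≤ FH F 𝒞 H X) ↔ (∀ C ∈ 𝒞, G C ≤ H C))) := by
  have hrestr : ∀ C ∈ 𝒞, FH F 𝒞 H C = H C := by
    intro C hC
    ext x
    constructor
    · intro hx
      have := hx C hC (𝟙 C)
      simpa using this
    · intro hx C' hC' α
      exact hH hC' hC α x hx
  refine ⟨hrestr, fun G hG => ⟨?_, ?_⟩⟩
  · intro h C hC x hx
    have := h C hx C hC (𝟙 C)
    simpa using this
  · intro h X x hx C hC α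
    exact h C hC (hG α x hx)

end Stmt4
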